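/- Let E be an additively written abelian group and n ≥ 1. Let x, y ∈ E each have additive order exactly n+1, with ⟨x⟩ ⊓ ⟨y⟩ = {0}. Assume the map e ↦ (n+1) • e is surjective on E and that its kernel is exactly the subgroup generated by x and y. Then the set of multisets M over E with card M = n+1, sum M = 0, and M.map (e ↦ e + x) = M has exactly n+1 elements. -/
import Mathlib

section Aux

variable {E : Type*} [AddCommGroup E] (n : ℕ)

/-- The hom `ZMod (n+1) →+ E` sending `1` to an element killed by `n+1`. -/
noncomputable def auxHom (x : E) (hx : (n + 1 : ℤ) • x = 0) : ZMod (n + 1) →+ E :=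
  ZMod.lift (n + 1) ⟨zmultiplesHom E x, by simpa using hx⟩

theorem auxHom_coe (x : E) (hx : (n + 1 : ℤ) • x = 0) (a : ℤ) :
    auxHom n x hx ((a : ZMod (n + 1))) = a • x := ZMod.lift_coe _ _ _

theorem auxHom_apply (x : E) (hx : (n + 1 : ℤ) • x = 0) (k : ZMod (n + 1)) :
    auxHom n x hx k = (k.val : ℤ) • x := by
  conv_lhs => rw [← ZMod.natCast_rightInverse k]
  rw [show ((k.val : ℕ) : ZMod (n + 1)) = ((k.val : ℤ) : ZMod (n + 1)) by push_cast; rfl,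
    auxHom_coe]

theorem auxHom_mem (x : E) (hx : (n + 1 : ℤ) • x = 0) (k : ZMod (n + 1)) :
    auxHom n x hx k ∈ AddSubgroup.zmultiples x := by
  rw [auxHom_apply]
  exact AddSubgroup.zsmul_mem _ (AddSubgroup.mem_zmultiples x) _

theorem auxHom_injective (x : E) (hord : addOrderOf x = n + 1)
    (hx : (n + 1 : ℤ) • x = 0) : Function.Injective (auxHom n x hx) := by
  rw [injective_iff_map_eq_zero]
  intro k hk
  rw [auxHom_apply, natCast_zsmul] at hk
  rw [← addOrderOf_dvd_iff_nsmul_eq_zero, hord] at hk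
  exact (ZMod.val_eq_zero k).mp (Nat.eq_zero_of_dvd_of_lt hk (ZMod.val_lt k))

set_option linter.unusedSectionVars false in
/-- Reindexing a map over all of `ZMod (n+1)` by translation. -/
theorem map_univ_add (c : ZMod (n + 1)) (f : ZMod (n + 1) → E) :
    (Finset.univ.val.map fun k => f (c + k)) = Finset.univ.val.map f := by
  have h1 : (Finset.univ.val.map fun k : ZMod (n + 1) => c + k) = Finset.univ.val := by
    calc (Finset.univ.val.map fun k : ZMod (n + 1) => c + k)
        = (Finset.univ.map (Equiv.addLeft c).toEmbedding).val := rfl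
      _ = Finset.univ.val := by rw [Finset.map_univ_equiv]
  calc (Finset.univ.val.map fun k => f (c + k))
      = ((Finset.univ.val.map fun k : ZMod (n + 1) => c + k).map f) := by
        rw [Multiset.map_map]; rfl
    _ = Finset.univ.val.map f := by rw [h1]

end Aux

/-- Counting statement of Lemma 3.4 (Fix): under the stated torsion hypotheses,
the set of multisets of cardinality `n+1` with sum `0` that are invariant under
translation by `x` has exactly `n+1` elements. -/
theorem stmt_9 (E : Type*) [AddCommGroup E] (n : ℕ) (hn : 1 ≤ n) (x y : E)
    (hx : addOrderOf x = n + 1) (hy : addOrderOf y = n + 1)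
    (hxy : AddSubgroup.zmultiples x ⊓ AddSubgroup.zmultiples y = ⊥)
    (hsurj : Function.Surjective (fun e : E => (n + 1) • e))
    (hker : ∀ e : E, (n + 1) • e = 0 ↔ e ∈ AddSubgroup.closure ({x, y} : Set E)) :
    {M : Multiset E | Multiset.card M = n + 1 ∧ M.sum = 0 ∧
        M.map (fun e => e + x) = M}.ncard = n + 1 := by
  classical
  have hx1 : (n + 1) • x = 0 := by rw [← hx]; exact addOrderOf_nsmul_eq_zero x
  have hy1 : (n + 1) • y = 0 := by rw [← hy]; exact addOrderOf_nsmul_eq_zero y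
  have hcastn : ((n : ℤ) + 1) = ((n + 1 : ℕ) : ℤ) := by push_cast; ring
  have hxz : ((n : ℤ) + 1) • x = 0 := by rw [hcastn, natCast_zsmul]; exact hx1
  have hyz : ((n : ℤ) + 1) • y = 0 := by rw [hcastn, natCast_zsmul]; exact hy1
  set φ := auxHom n x hxz with hφdef
  set ψ := auxHom n y hyz with hψdef
  have hφinj : Function.Injective φ := auxHom_injective n x hx hxz
  have hψinj : Function.Injective ψ := auxHom_injective n y hy hyz
  have hφcoe : ∀ a : ℤ, φ ((a : ZMod (n + 1))) = a • x := fun a => auxHom_coe n x hxz a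
  have hψcoe : ∀ a : ℤ, ψ ((a : ZMod (n + 1))) = a • y := fun a => auxHom_coe n y hyz a
  have hφval : ∀ k, φ k = (k.val : ℤ) • x := fun k => auxHom_apply n x hxz k
  have hφone : φ 1 = x := by simpa using hφcoe 1
  set S : E := ∑ k : ZMod (n + 1), φ k with hSdef
  obtain ⟨t, ht⟩ := hsurj (-S)
  simp only at ht
  -- the candidate multisets
  set Mf : ZMod (n + 1) → Multiset E :=
    fun b => Finset.univ.val.map (fun k => t + ψ b + φ k) with hMfdef
  have hcardZ : Fintype.card (ZMod (n + 1)) = n + 1 := ZMod.card (n + 1)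
  have hcarduniv : Multiset.card (Finset.univ.val : Multiset (ZMod (n + 1))) = n + 1 := by
    show Finset.univ.card = n + 1
    rw [Finset.card_univ, hcardZ]
  have hψkill : ∀ b : ZMod (n + 1), (n + 1) • ψ b = 0 := by
    intro b
    rw [← map_nsmul]
    have hb : (n + 1) • b = 0 := by
      rw [nsmul_eq_mul]
      push_cast
      rw [show ((n : ZMod (n + 1)) + 1) = ((n + 1 : ℕ) : ZMod (n + 1)) by push_cast; ring,
        ZMod.natCast_self]
      ring
    rw [hb, map_zero]
  -- each Mf b is in the set
  have hmem : ∀ b, Mf b ∈ {M : Multiset E | Multiset.card M = n + 1 ∧ M.sum = 0 ∧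
      M.map (fun e => e + x) = M} := by
    intro b
    refine ⟨?_, ?_, ?_⟩
    · show Multiset.card (Mf b) = n + 1
      rw [hMfdef]
      simp only [Multiset.card_map]
      exact hcarduniv
    · show (Mf b).sum = 0
      have h0 : (Mf b).sum = ∑ k : ZMod (n + 1), (t + ψ b + φ k) := rfl
      rw [h0, Finset.sum_add_distrib, Finset.sum_const, Finset.card_univ, hcardZ, ← hSdef,
        smul_add, ht, hψkill]
      abel
    · show (Mf b).map (fun e => e + x) = Mf b
      have h1 : (Mf b).map (fun e => e + x)
          = Finset.univ.val.map (fun k => t + ψ b + φ (1 + k)) := by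
        rw [hMfdef, Multiset.map_map]
        congr 1
        funext k
        simp only [Function.comp_apply, map_add, hφone]
        abel
      rw [h1]
      exact map_univ_add n 1 (fun j => t + ψ b + φ j)
  -- injectivity of Mf
  have hMfinj : Function.Injective Mf := by
    intro b b' hbb'
    have h0 : t + ψ b ∈ Mf b := by
      have h0' : t + ψ b = t + ψ b + φ 0 := by simp
      rw [h0', hMfdef]
      exact Multiset.mem_map_of_mem _ (Finset.mem_univ_val 0)
    rw [hbb', hMfdef] at h0
    obtain ⟨k, -, hk⟩ := Multiset.mem_map.mp h0
    rw [add_assoc] at hk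
    have h2 : ψ b' + φ k = ψ b := add_left_cancel hk
    have hdiff : ψ (b - b') = φ k := by
      rw [map_sub, ← h2]; abel
    have hmemx : ψ (b - b') ∈ AddSubgroup.zmultiples x := by
      rw [hdiff]; exact auxHom_mem n x hxz k
    have hmemy : ψ (b - b') ∈ AddSubgroup.zmultiples y := auxHom_mem n y hyz _
    have hbot : ψ (b - b') ∈ AddSubgroup.zmultiples x ⊓ AddSubgroup.zmultiples y :=
      ⟨hmemx, hmemy⟩
    rw [hxy, AddSubgroup.mem_bot] at hbot
    have := hψinj (hbot.trans (map_zero ψ).symm)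
    exact sub_eq_zero.mp this
  -- the set equals the range of Mf
  have hset : {M : Multiset E | Multiset.card M = n + 1 ∧ M.sum = 0 ∧
      M.map (fun e => e + x) = M} = Set.range Mf := by
    apply Set.eq_of_subset_of_subset
    · rintro M ⟨hcard, hsum, hmap⟩
      -- counts are invariant under translation by x
      have hc : ∀ e : E, M.count (e + x) = M.count e := by
        intro e
        conv_lhs => rw [← hmap]
        exact Multiset.count_map_eq_count' _ M (add_left_injective x) e
      have hck : ∀ (e : E) (k : ℕ), M.count (e + k • x) = M.count e := by
        intro e k
        induction k with
        | zero => simp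
        | succ m ih => rw [succ_nsmul, ← add_assoc, hc, ih]
      have hcφ : ∀ (e : E) (k : ZMod (n + 1)), M.count (e + φ k) = M.count e := by
        intro e k
        rw [hφval, natCast_zsmul]
        exact hck e k.val
      -- pick an element of M
      have hM0 : M ≠ 0 := by
        intro h; rw [h] at hcard; simp at hcard
      obtain ⟨e, he⟩ := Multiset.exists_mem_of_ne_zero hM0
      -- the orbit of e
      set orbit : Multiset E := Finset.univ.val.map (fun k => e + φ k) with horb
      have hnodup : orbit.Nodup := by
        refine Multiset.Nodup.map ?_ Finset.univ.nodup
        intro a b hab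
        exact hφinj (add_left_cancel hab)
      have hle : orbit ≤ M := by
        rw [Multiset.le_iff_count]
        intro a
        by_cases ha : a ∈ orbit
        · rw [Multiset.count_eq_one_of_mem hnodup ha]
          obtain ⟨k, -, hk⟩ := Multiset.mem_map.mp ha
          rw [← hk, hcφ]
          exact Multiset.one_le_count_iff_mem.mpr he
        · rw [Multiset.count_eq_zero_of_notMem ha]
          exact Nat.zero_le _
      have hcardorb : Multiset.card orbit = n + 1 := by
        rw [horb, Multiset.card_map]
        exact hcarduniv
      have hMeq : M = orbit :=
        (Multiset.eq_of_le_of_card_le hle (by rw [hcard, hcardorb])).symm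
      -- compute the sum
      have hsumorb : (n + 1) • e + S = 0 := by
        rw [← hsum, hMeq]
        have h0 : orbit.sum = ∑ k : ZMod (n + 1), (e + φ k) := rfl
        rw [h0, Finset.sum_add_distrib, Finset.sum_const, Finset.card_univ, hcardZ, ← hSdef]
      -- so e - t is in the kernel
      have hkere : (n + 1) • (e - t) = 0 := by
        have he' : (n + 1) • e = -S :=
          eq_neg_of_add_eq_zero_left hsumorb
        rw [smul_sub, ht, he']; abel
      rw [hker, AddSubgroup.mem_closure_pair] at hkere
      obtain ⟨a, b, hab⟩ := hkere
      refine ⟨(b : ZMod (n + 1)), ?_⟩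
      have he_eq : e = t + ψ ((b : ZMod (n + 1))) + φ ((a : ZMod (n + 1))) := by
        rw [hψcoe, hφcoe]
        have h3 : e = t + (a • x + b • y) := by rw [hab]; abel
        rw [h3]; abel
      have key : orbit = Mf ((b : ZMod (n + 1))) := by
        rw [horb, hMfdef]
        have h1 : (Finset.univ.val.map fun k => e + φ k)
            = Finset.univ.val.map
              (fun k => t + ψ ((b : ZMod (n + 1))) + φ ((a : ZMod (n + 1)) + k)) := by
          congr 1
          funext k
          rw [map_add, he_eq]
          abel
        rw [h1]
        exact map_univ_add n ((a : ZMod (n + 1)))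
          (fun j => t + ψ ((b : ZMod (n + 1))) + φ j)
      rw [hMeq, key]
    · rintro M ⟨b, rfl⟩
      exact hmem b
  rw [hset]
  have hrange : Set.range Mf = ↑(Finset.univ.image Mf) := by simp
  rw [hrange, Set.ncard_coe_finset, Finset.card_image_of_injective _ hMfinj,
    Finset.card_univ, hcardZ]
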